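/- Under a general metric, a fairly-preferring hospital can strictly prefer a deterministic unfair alternative to every PIIF allocation: let D = {i, j} and H = {A, B}, let d be the pseudometric with d(i,j) = 1/3, and suppose both doctors have the preference A ≻ B. Then every probabilistic allocation π that is PIIF with respect to total variation distance and d satisfies Pr_{m∼π}[m(j) = A] ≥ 1/3, and consequently (2/3)·Pr_{m∼π}[m(i) = A] + (1/3)·Pr_{m∼π}[m(j) = A] ≤ 5/9 < 2/3. In particular, if hospital A samples the order i ≻ j with probability 2/3 and j ≻ i with probability 1/3, then under any PIIF allocation the probability that A is matched to its sampled top-ranked doctor is at most 5/9, whereas the deterministic matching sending i to A achieves probability 2/3. -/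
import Mathlib


open Finset

/-- A probabilistic allocation: a finitely supported probability distribution over
matchings (bijections between doctors `D` and hospitals `H`). -/
def IsAlloc {D H : Type*} [Fintype D] [Fintype H] [DecidableEq D] [DecidableEq H]
    (π : (D ≃ H) → ℝ) : Prop :=
  (∀ m, 0 ≤ π m) ∧ (∑ m : D ≃ H, π m) = 1

/-- The prospect of doctor `i` under the allocation `π`: the probability that `i`
is matched to hospital `h`. -/
def prospect {D H : Type*} [Fintype D] [Fintype H] [DecidableEq D] [DecidableEq H]
    (π : (D ≃ H) → ℝ) (i : D) (h : H) : ℝ :=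
  ∑ m : D ≃ H, if m i = h then π m else 0

/-- `p` is a probability distribution on `H`. -/
def IsDist {H : Type*} [Fintype H] (p : H → ℝ) : Prop :=
  (∀ h, 0 ≤ p h) ∧ (∑ h : H, p h) = 1

/-- Total variation distance between two distributions on `H`. -/
noncomputable def TV {H : Type*} [Fintype H] (p q : H → ℝ) : ℝ :=
  (1 / 2) * ∑ h : H, |p h - q h|

/-- `p` stochastically dominates `q` with respect to the strict preference relation
`pref` (where `pref x y` means `x` is strictly preferred to `y`): for every `h`, the
probability of an outcome at least as good as `h` under `p` is at least that under `q`. -/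
def SDom {H : Type*} [Fintype H] (pref : H → H → Prop) (p q : H → ℝ) : Prop :=
  ∀ h : H,
    (∑ h' : H, Set.indicator {x : H | pref x h ∨ x = h} q h') ≤
      ∑ h' : H, Set.indicator {x : H | pref x h ∨ x = h} p h'

/-- Preference-informed individual fairness with respect to a (pseudo)metric `d`,
total variation distance, and the doctors' strict preferences `pref`. -/
def PIIF {D H : Type*} [Fintype D] [Fintype H] [DecidableEq D] [DecidableEq H]
    (d : D → D → ℝ) (pref : D → H → H → Prop) (π : (D ≃ H) → ℝ) : Prop :=
  ∀ i j : D, ∃ p : H → ℝ,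
    IsDist p ∧ TV p (prospect π j) ≤ d i j ∧ SDom (pref i) (prospect π i) p

/-- PIIF with respect to the proto-metric induced by the cluster map `c`: the prospect
of every doctor stochastically dominates the prospect of every doctor in its cluster. -/
def ClusterPIIF {D H K : Type*} [Fintype D] [Fintype H] [DecidableEq D] [DecidableEq H]
    (c : D → K) (pref : D → H → H → Prop) (π : (D ≃ H) → ℝ) : Prop :=
  ∀ i j : D, c i = c j → SDom (pref i) (prospect π i) (prospect π j)

namespace Stmt7

/-! Doctors: `i = 0`, `j = 1`.  Hospitals: `A = 0`, `B = 1`. -/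

/-- The pseudometric with `d(i,j) = 1/3`. -/
noncomputable def dmet : Fin 2 → Fin 2 → ℝ := fun x y => if x = y then 0 else 1 / 3

/-- Both doctors prefer `A = 0` to `B = 1`. -/
def dpref : Fin 2 → Fin 2 → Fin 2 → Prop := fun _ h1 h2 => h1 < h2

/-- The deterministic allocation matching `i ↦ A, j ↦ B` (the identity matching). -/
noncomputable def detAlloc : (Fin 2 ≃ Fin 2) → ℝ := fun m =>
  if m = Equiv.refl (Fin 2) then 1 else 0


lemma sum_perm (f : (Fin 2 ≃ Fin 2) → ℝ) :
    ∑ m : Fin 2 ≃ Fin 2, f m = f (Equiv.refl (Fin 2)) + f (Equiv.swap 0 1) := by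
  have huniv : (Finset.univ : Finset (Fin 2 ≃ Fin 2)) =
      {Equiv.refl (Fin 2), Equiv.swap 0 1} := by decide
  rw [huniv, Finset.sum_pair (by decide)]

lemma prospect00 (π : (Fin 2 ≃ Fin 2) → ℝ) :
    prospect π 0 0 = π (Equiv.refl (Fin 2)) := by
  unfold prospect; rw [sum_perm]
  norm_num [show (Equiv.refl (Fin 2)) 0 = 0 from rfl,
    show (Equiv.swap (0:Fin 2) 1) 0 = 1 from rfl]

lemma prospect01 (π : (Fin 2 ≃ Fin 2) → ℝ) :
    prospect π 0 1 = π (Equiv.swap 0 1) := by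
  unfold prospect; rw [sum_perm]
  norm_num [show (Equiv.refl (Fin 2)) 0 = 0 from rfl,
    show (Equiv.swap (0:Fin 2) 1) 0 = 1 from rfl]

lemma prospect10 (π : (Fin 2 ≃ Fin 2) → ℝ) :
    prospect π 1 0 = π (Equiv.swap 0 1) := by
  unfold prospect; rw [sum_perm]
  norm_num [show (Equiv.refl (Fin 2)) 1 = 1 from rfl,
    show (Equiv.swap (0:Fin 2) 1) 1 = 0 from rfl]

/-- Under a general metric, a fairly-preferring hospital can strictly
prefer a deterministic unfair alternative to every PIIF allocation: with `d(i,j) = 1/3`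
and both doctors preferring `A ≻ B`, every PIIF allocation `π` matches `j` to `A` with
probability at least `1/3`, hence
`(2/3)·Pr[m(i) = A] + (1/3)·Pr[m(j) = A] ≤ 5/9 < 2/3`; thus if hospital `A` samples
the order `i ≻ j` with probability `2/3` and `j ≻ i` with probability `1/3`, the
probability that `A` receives its sampled top doctor is at most `5/9` under any PIIF
allocation, whereas the deterministic matching sending `i` to `A` achieves `2/3`. -/
theorem fair_preferences_prefer_unfair_deterministic_alternative :
    (∀ π : (Fin 2 ≃ Fin 2) → ℝ, IsAlloc π → PIIF dmet dpref π →
      1 / 3 ≤ prospect π 1 0 ∧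
      (2 / 3) * prospect π 0 0 + (1 / 3) * prospect π 1 0 ≤ 5 / 9) ∧
    (5 : ℝ) / 9 < 2 / 3 ∧
    (2 / 3) * prospect detAlloc 0 0 + (1 / 3) * prospect detAlloc 1 0 = 2 / 3 := by
  refine ⟨?_, by norm_num, ?_⟩
  · intro π hA hP
    obtain ⟨hpos, hsum⟩ := hA
    have hab : prospect π 0 0 + prospect π 1 0 = 1 := by
      rw [prospect00, prospect10, ← hsum, sum_perm]
    obtain ⟨p, ⟨ppos, psum⟩, htv, hsd⟩ := hP 1 0
    have hdm : dmet 1 0 = 1 / 3 := by norm_num [dmet]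
    rw [hdm] at htv
    have hsd0 := hsd 0
    have hmem0 : (0 : Fin 2) ∈ {x : Fin 2 | dpref 1 x 0 ∨ x = 0} := by
      right; rfl
    have hmem1 : (1 : Fin 2) ∉ {x : Fin 2 | dpref 1 x 0 ∨ x = 0} := by
      intro h; rcases h with h | h <;> simp [dpref] at h
    rw [Fin.sum_univ_two, Fin.sum_univ_two, Set.indicator_of_mem hmem0,
      Set.indicator_of_mem hmem0, Set.indicator_of_notMem hmem1,
      Set.indicator_of_notMem hmem1] at hsd0
    have hq : prospect π 0 0 + prospect π 0 1 = 1 := by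
      rw [prospect00, prospect01, ← hsum, sum_perm]
    have hp : p 0 + p 1 = 1 := by rw [← psum, Fin.sum_univ_two]
    unfold TV at htv
    rw [Fin.sum_univ_two] at htv
    have h01 : prospect π 0 1 = prospect π 1 0 := by rw [prospect01, prospect10]
    rw [h01] at hq
    have habs : |p 0 - prospect π 0 0| ≤ 1 / 3 := by
      have : p 1 - prospect π 0 1 = -(p 0 - prospect π 0 0) := by
        rw [h01]; linarith
      rw [this, abs_neg] at htv; linarith
    have hb : 1 / 3 ≤ prospect π 1 0 := by
      have := abs_le.mp habs
      linarith [this.1, this.2, hsd0]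
    exact ⟨hb, by linarith⟩
  · rw [prospect00, prospect10]
    norm_num [detAlloc, show Equiv.swap (0:Fin 2) 1 ≠ Equiv.refl (Fin 2) from by decide]


end Stmt7
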